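/- Let n ≥ 2 be a natural number and let N be any subspace of C[0,1] with dimension < n. Then sup{inf{‖Vf − g‖_∞ : g ∈ N} : f ∈ L¹(0,1), ‖f‖₁ ≤ 1} ≥ 1/2. (Consequently the n-th Kolmogorov number of V satisfies d_n(V) ≥ 1/2.) -/

import Mathlib

open MeasureTheory

noncomputable section

/-- The space `L¹(0,1)` of Lebesgue integrable functions on `(0,1)`. -/
abbrev L1 : Type := Lp ℝ 1 ((volume : Measure ℝ).restrict (Set.Ioo (0:ℝ) 1))

/-- The space `C[0,1]` of continuous real functions on `[0,1]` with the supremum norm. -/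
abbrev C01 : Type := C(Set.Icc (0:ℝ) 1, ℝ)

/-- `V` is the Volterra operator: `(V f)(t) = ∫₀ᵗ f(s) ds` for `f ∈ L¹(0,1)`. -/
def IsVolterra (V : L1 →L[ℝ] C01) : Prop :=
  ∀ f : L1, ∀ t : Set.Icc (0:ℝ) 1,
    V f t = ∫ s in Set.Ioo (0:ℝ) (t:ℝ), f s
      ∂((volume : Measure ℝ).restrict (Set.Ioo (0:ℝ) 1))

lemma vol_Ioo' (a b : ℝ) (ha : 0 ≤ a) (hb : b ≤ 1) :
    (volume : Measure ℝ).restrict (Set.Ioo (0:ℝ) 1) (Set.Ioo a b) = ENNReal.ofReal (b - a) := by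
  rw [Measure.restrict_apply measurableSet_Ioo,
    Set.inter_eq_self_of_subset_left (Set.Ioo_subset_Ioo ha hb), Real.volume_Ioo]

lemma eval_indic (a b c p : ℝ)
    (hμ : (volume : Measure ℝ).restrict (Set.Ioo (0:ℝ) 1) (Set.Ioo a b) ≠ ⊤) :
    ∫ s in Set.Ioo (0:ℝ) p,
      (indicatorConstLp 1 measurableSet_Ioo hμ c : L1) s
        ∂((volume : Measure ℝ).restrict (Set.Ioo (0:ℝ) 1))
    = c * (((volume : Measure ℝ).restrict (Set.Ioo (0:ℝ) 1))
        (Set.Ioo 0 p ∩ Set.Ioo a b)).toReal := by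
  have h1 := indicatorConstLp_coeFn (p := 1)
    (μ := (volume : Measure ℝ).restrict (Set.Ioo (0:ℝ) 1))
    (hs := measurableSet_Ioo (a := a) (b := b)) (hμs := hμ) (c := c)
  rw [integral_congr_ae (ae_restrict_of_ae h1)]
  rw [setIntegral_indicator measurableSet_Ioo, setIntegral_const, smul_eq_mul, mul_comm]
  rfl

lemma ramp_exists (m : ℕ) (hm : 0 < m) (V : L1 →L[ℝ] C01) (hV : IsVolterra V) :
    ∃ f : Fin m → L1, (∀ i, ‖f i‖ ≤ 1) ∧
      ∀ i j : Fin m, i ≠ j → 1 ≤ ‖V (f i) - V (f j)‖ := by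
  have hM : (0:ℝ) < m := by exact_mod_cast hm
  set a : Fin m → ℝ := fun i => (2*(i:ℕ)+1)/(2*m) with ha
  set b : Fin m → ℝ := fun i => (2*(i:ℕ)+2)/(2*m) with hb
  have hia : ∀ i : Fin m, (0:ℝ) ≤ a i := by
    intro i; apply div_nonneg <;> positivity
  have hib : ∀ i : Fin m, b i ≤ 1 := by
    intro i
    have : ((i:ℕ):ℝ) + 1 ≤ m := by exact_mod_cast i.2
    rw [hb, div_le_one (by positivity)]; push_cast; linarith
  have hμs : ∀ i : Fin m,
      (volume : Measure ℝ).restrict (Set.Ioo (0:ℝ) 1) (Set.Ioo (a i) (b i))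
        = ENNReal.ofReal (1/(2*m)) := by
    intro i
    rw [vol_Ioo' _ _ (hia i) (hib i)]
    congr 1
    rw [ha, hb]
    field_simp
    norm_num
    ring
  have hμs' : ∀ i : Fin m,
      (volume : Measure ℝ).restrict (Set.Ioo (0:ℝ) 1) (Set.Ioo (a i) (b i)) ≠ ⊤ := by
    intro i; rw [hμs i]; exact ENNReal.ofReal_ne_top
  set f : Fin m → L1 := fun i =>
    indicatorConstLp 1 measurableSet_Ioo (hμs' i) ((2*m : ℝ)) with hf
  -- evaluation points
  have hp01 : ∀ i : Fin m, ((i:ℕ)+1)/(m:ℝ) ∈ Set.Icc (0:ℝ) 1 := by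
    intro i
    constructor
    · positivity
    · rw [div_le_one hM]
      exact_mod_cast i.2
  -- value of V (f j) at point p i
  have heval : ∀ i j : Fin m, V (f j) ⟨((i:ℕ)+1)/(m:ℝ), hp01 i⟩
      = (2*m) * (((volume : Measure ℝ).restrict (Set.Ioo (0:ℝ) 1))
          (Set.Ioo 0 (((i:ℕ)+1)/(m:ℝ)) ∩ Set.Ioo (a j) (b j))).toReal := by
    intro i j
    rw [hV (f j) ⟨((i:ℕ)+1)/(m:ℝ), hp01 i⟩]
    exact eval_indic _ _ _ _ (hμs' j)
  have hself : ∀ i : Fin m, V (f i) ⟨((i:ℕ)+1)/(m:ℝ), hp01 i⟩ = 1 := by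
    intro i
    rw [heval i i]
    have hsub : Set.Ioo (a i) (b i) ⊆ Set.Ioo 0 (((i:ℕ)+1)/(m:ℝ)) := by
      apply Set.Ioo_subset_Ioo
      · rw [ha]; positivity
      · rw [hb]
        rw [div_le_div_iff₀ (by positivity) hM]
        ring_nf
        nlinarith
    rw [Set.inter_eq_self_of_subset_right hsub, hμs i,
      ENNReal.toReal_ofReal (by positivity)]
    field_simp
  have hother : ∀ i j : Fin m, i < j → V (f j) ⟨((i:ℕ)+1)/(m:ℝ), hp01 i⟩ = 0 := by
    intro i j hij
    rw [heval i j]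
    have hempty : Set.Ioo (0:ℝ) (((i:ℕ)+1)/(m:ℝ)) ∩ Set.Ioo (a j) (b j) = ∅ := by
      rw [Set.eq_empty_iff_forall_notMem]
      rintro x ⟨⟨_, hx2⟩, ⟨hx3, _⟩⟩
      have hij' : ((i:ℕ):ℝ) + 1 ≤ (j:ℕ) := by exact_mod_cast hij
      have : ((i:ℕ)+1)/(m:ℝ) ≤ a j := by
        rw [ha, div_le_div_iff₀ hM (by positivity)]
        ring_nf
        nlinarith
      linarith
    rw [hempty]
    simp
  refine ⟨f, ?_, ?_⟩
  · intro i
    rw [hf]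
    rw [norm_indicatorConstLp one_ne_zero ENNReal.one_ne_top]
    rw [measureReal_def, hμs i, ENNReal.toReal_ofReal (by positivity)]
    simp only [ENNReal.toReal_one, div_one, Real.rpow_one, Real.norm_eq_abs]
    rw [abs_of_nonneg (by positivity)]
    rw [mul_one_div, div_self (by positivity)]
  · have key : ∀ i j : Fin m, i < j → 1 ≤ ‖V (f i) - V (f j)‖ := by
      intro i j hij
      have h1 : |(V (f i) - V (f j)) ⟨((i:ℕ)+1)/(m:ℝ), hp01 i⟩| ≤ ‖V (f i) - V (f j)‖ :=
        (V (f i) - V (f j)).norm_coe_le_norm _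
      rw [ContinuousMap.sub_apply, hself i, hother i j hij] at h1
      simpa using h1
    intro i j hij
    rcases lt_or_gt_of_ne hij with h | h
    · exact key i j h
    · rw [norm_sub_rev]; exact key j i h

/-- Lower bound for the Kolmogorov numbers of the Volterra operator: for any subspace
`N ⊆ C[0,1]` with `dim N < n` (`n ≥ 2`), the deviation of `V(B_{L¹})` from `N` is `≥ 1/2`. -/
theorem kolmogorov_lower_bound_volterra (n : ℕ) (hn : 2 ≤ n)
    (V : L1 →L[ℝ] C01) (hV : IsVolterra V)
    (N : Submodule ℝ C01) (hN : Module.rank ℝ N < (n : Cardinal)) :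
    1 / 2 ≤ sSup {s : ℝ | ∃ f : L1, ‖f‖ ≤ 1 ∧
      s = sInf {d : ℝ | ∃ g ∈ N, d = ‖V f - g‖}} := by
  classical
  by_contra hcon
  push_neg at hcon
  set S := {s : ℝ | ∃ f : L1, ‖f‖ ≤ 1 ∧
      s = sInf {d : ℝ | ∃ g ∈ N, d = ‖V f - g‖}} with hSdef
  -- basic facts about the inner sets
  have hDne : ∀ f : L1, ({d : ℝ | ∃ g ∈ N, d = ‖V f - g‖}).Nonempty := by
    intro f; exact ⟨‖V f - 0‖, 0, N.zero_mem, rfl⟩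
  have hDbdd : ∀ f : L1, BddBelow {d : ℝ | ∃ g ∈ N, d = ‖V f - g‖} := by
    intro f; refine ⟨0, ?_⟩; rintro d ⟨g, -, rfl⟩; positivity
  have hbddS : BddAbove S := by
    refine ⟨‖V‖, ?_⟩
    rintro s ⟨f, hf, rfl⟩
    refine le_trans (csInf_le (hDbdd f) ⟨0, N.zero_mem, rfl⟩) ?_
    rw [sub_zero]
    calc ‖V f‖ ≤ ‖V‖ * ‖f‖ := V.le_opNorm f
    _ ≤ ‖V‖ * 1 := by gcongr
    _ = ‖V‖ := mul_one _
  set c := sSup S with hc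
  set δ := (1/2 - c)/4 with hδdef
  have hδ : 0 < δ := by
    rw [hδdef]; linarith
  -- finite dimensionality of N
  have hfin : FiniteDimensional ℝ N := by
    haveI : Module.Free ℝ N := Module.Free.of_divisionRing ℝ N
    exact Module.rank_lt_aleph0_iff.mp (hN.trans (Cardinal.nat_lt_aleph0 n))
  -- totally bounded ball in N
  have htb : TotallyBounded (Metric.closedBall (0 : N) (‖V‖ + 1)) :=
    (isCompact_closedBall _ _).totallyBounded
  obtain ⟨t, htfin, htcover⟩ := Metric.totallyBounded_iff.mp htb δ hδ
  haveI : Fintype t := htfin.fintype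
  set m := Fintype.card t + 1 with hm
  obtain ⟨f, hfnorm, hsep⟩ := ramp_exists m (Nat.succ_pos _) V hV
  -- approximants
  have hexists : ∀ i : Fin m, ∃ g : N, ‖V (f i) - (g : C01)‖ < c + δ := by
    intro i
    have hmem : sInf {d : ℝ | ∃ g ∈ N, d = ‖V (f i) - g‖} ∈ S :=
      ⟨f i, hfnorm i, rfl⟩
    have h2 : sInf {d : ℝ | ∃ g ∈ N, d = ‖V (f i) - g‖} < c + δ :=
      lt_of_le_of_lt (le_csSup hbddS hmem) (by linarith)
    obtain ⟨d, ⟨g, hgN, rfl⟩, hd⟩ := exists_lt_of_csInf_lt (hDne (f i)) h2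
    exact ⟨⟨g, hgN⟩, hd⟩
  choose g hg using hexists
  have hball : ∀ i, g i ∈ Metric.closedBall (0 : N) (‖V‖ + 1) := by
    intro i
    rw [Metric.mem_closedBall, dist_zero_right]
    have h1 : ‖(g i : C01)‖ ≤ ‖V (f i)‖ + ‖V (f i) - (g i : C01)‖ := by
      have heq : (g i : C01) = V (f i) - (V (f i) - (g i : C01)) := by abel
      calc ‖(g i : C01)‖ = ‖V (f i) - (V (f i) - (g i : C01))‖ := by rw [← heq]
      _ ≤ ‖V (f i)‖ + ‖V (f i) - (g i : C01)‖ := norm_sub_le _ _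
    have h2 : ‖V (f i)‖ ≤ ‖V‖ := by
      calc ‖V (f i)‖ ≤ ‖V‖ * ‖f i‖ := V.le_opNorm _
      _ ≤ ‖V‖ * 1 := by gcongr; exact hfnorm i
      _ = ‖V‖ := mul_one _
    have h3 : ‖(g i : C01)‖ ≤ ‖V‖ + (c + δ) := by
      have := hg i; linarith
    have hcδ : c + δ ≤ 1 := by
      rw [hδdef]; linarith
    calc ‖g i‖ = ‖(g i : C01)‖ := rfl
    _ ≤ ‖V‖ + (c + δ) := h3
    _ ≤ ‖V‖ + 1 := by linarith
  have hy : ∀ i : Fin m, ∃ y : t, g i ∈ Metric.ball (y : N) δ := by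
    intro i
    have := htcover (hball i)
    simp only [Set.mem_iUnion] at this
    obtain ⟨y, hyt, hmem⟩ := this
    exact ⟨⟨y, hyt⟩, hmem⟩
  choose y hy using hy
  have hcard : Fintype.card t < Fintype.card (Fin m) := by
    rw [Fintype.card_fin]; exact Nat.lt_succ_self _
  obtain ⟨i, j, hij, hyij⟩ := Fintype.exists_ne_map_eq_of_card_lt y hcard
  -- distances
  have hgij : ‖(g i : C01) - (g j : C01)‖ < 2 * δ := by
    have h1 : dist (g i) ((y i : N)) < δ := hy i
    have h2 : dist (g j) ((y j : N)) < δ := hy j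
    rw [hyij] at h1
    have := dist_triangle_right (g i) (g j) ((y j : N))
    have hd : dist (g i) (g j) < 2 * δ := by linarith
    calc ‖(g i : C01) - (g j : C01)‖ = dist (g i : C01) (g j : C01) := (dist_eq_norm _ _).symm
    _ = dist (g i) (g j) := (Subtype.dist_eq _ _).symm
    _ < 2 * δ := hd
  have hvij : 1 ≤ ‖V (f i) - V (f j)‖ := hsep i j hij
  have htri : ‖V (f i) - V (f j)‖ ≤
      ‖V (f i) - (g i : C01)‖ + ‖(g i : C01) - (g j : C01)‖ + ‖(g j : C01) - V (f j)‖ := by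
    have := norm_sub_le_norm_sub_add_norm_sub (V (f i)) ((g i : C01)) (V (f j))
    have h2 := norm_sub_le_norm_sub_add_norm_sub ((g i : C01)) ((g j : C01)) (V (f j))
    linarith
  have hlast : ‖(g j : C01) - V (f j)‖ < c + δ := by
    rw [norm_sub_rev]; exact hg j
  have : (1:ℝ) < 2*(c+δ) + 2*δ := by
    have := hg i
    linarith
  rw [hδdef] at this
  linarith
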